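/- A subset A of an abelian Polish group G is strongly Haar meager if and only if it is Haar meager with an injective witness function, i.e., there exist a Borel set B ⊇ A, a nonempty compact metric space K and an injective continuous f : K → G with f⁻¹(B+g) meager in K for all g ∈ G. -/

import Mathlib

/-- A set in an abelian Polish group is Haar meager (Darji) if some Borel superset has a
continuous witness function from a nonempty compact metric space all of whose preimages of
translates are meager. -/
def HaarMeager {G : Type*} [AddCommGroup G] [TopologicalSpace G] (A : Set G) : Prop :=
  ∃ B : Set G, A ⊆ B ∧ @MeasurableSet G (borel G) B ∧
    ∃ (K : Type) (_ : MetricSpace K), Nonempty K ∧ CompactSpace K ∧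
      ∃ f : K → G, Continuous f ∧ ∀ g : G, IsMeagre (f ⁻¹' ((fun x => x + g) '' B))

/-- A set is strongly Haar meager if some Borel superset has a compact witness set meeting
every translate in a relatively meager set. -/
def StronglyHaarMeager {G : Type*} [AddCommGroup G] [TopologicalSpace G] (A : Set G) : Prop :=
  ∃ B : Set G, A ⊆ B ∧ @MeasurableSet G (borel G) B ∧
    ∃ C : Set G, C.Nonempty ∧ IsCompact C ∧
      ∀ g : G, IsMeagre (Subtype.val ⁻¹' ((fun x => x + g) '' B) : Set C)

/-- Homeomorphisms preserve meagerness. -/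
lemma Homeomorph.isMeagre_preimage {X Y : Type*} [TopologicalSpace X] [TopologicalSpace Y]
    (e : X ≃ₜ Y) {s : Set Y} : IsMeagre (e ⁻¹' s) ↔ IsMeagre s := by
  rw [IsMeagre, IsMeagre, ← Set.preimage_compl, ← e.residual_map_eq, Filter.mem_map]

theorem stronglyHaarMeager_iff_injective_witness {G : Type*} [AddCommGroup G]
    [TopologicalSpace G] [IsTopologicalAddGroup G] [PolishSpace G] (A : Set G) :
    StronglyHaarMeager A ↔
      ∃ B : Set G, A ⊆ B ∧ @MeasurableSet G (borel G) B ∧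
        ∃ (K : Type) (_ : MetricSpace K), Nonempty K ∧ CompactSpace K ∧
          ∃ f : K → G, Function.Injective f ∧ Continuous f ∧
            ∀ g : G, IsMeagre (f ⁻¹' ((fun x => x + g) '' B)) := by
  constructor
  · rintro ⟨B, hAB, hB, C, hCne, hCc, hmeag⟩
    letI := TopologicalSpace.upgradeIsCompletelyMetrizable G
    haveI : Nonempty C := hCne.to_subtype
    haveI : CompactSpace C := isCompact_iff_compactSpace.mp hCc
    -- embed C into ℓ^∞(ℕ), a Type-0 space
    let ψ := kuratowskiEmbedding C
    have hψ : Isometry ψ := kuratowskiEmbedding.isometry C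
    let e : C ≃ₜ Set.range ψ := hψ.isEmbedding.toHomeomorph
    refine ⟨B, hAB, hB, Set.range ψ, inferInstance, ⟨e (Classical.arbitrary C)⟩,
      e.compactSpace, Subtype.val ∘ e.symm, ?_, continuous_subtype_val.comp e.symm.continuous,
      fun g => ?_⟩
    · exact Subtype.val_injective.comp e.symm.injective
    · have : (Subtype.val ∘ e.symm) ⁻¹' ((fun x => x + g) '' B)
          = e.symm ⁻¹' (Subtype.val ⁻¹' ((fun x => x + g) '' B)) := rfl
      rw [this, e.symm.isMeagre_preimage]
      exact hmeag g
  · rintro ⟨B, hAB, hB, K, _, hKne, hKc, f, hfi, hfc, hmeag⟩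
    have hemb : Topology.IsClosedEmbedding f := hfc.isClosedEmbedding hfi
    let e : K ≃ₜ Set.range f := hemb.toIsEmbedding.toHomeomorph
    refine ⟨B, hAB, hB, Set.range f, Set.range_nonempty f, isCompact_range hfc, fun g => ?_⟩
    have h := hmeag g
    have : e ⁻¹' (Subtype.val ⁻¹' ((fun x => x + g) '' B) : Set (Set.range f))
        = f ⁻¹' ((fun x => x + g) '' B) := rfl
    rw [← e.isMeagre_preimage, this]
    exact h
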